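/- For any integers d ≥ 2 and ℓ ≥ 2, every S'_d-free graph that does not contain K_{ℓ,ℓ} as a subgraph is k-degenerate for some k = O(ℓ^{2d−1}); concretely, its degeneracy is at most (ℓ−1)·(ℓ^{d−1} + (d−1)·ℓ^d + ℓ^{2d−2}) + 1. -/

import Mathlib

set_option linter.unusedSectionVars false
set_option linter.unusedVariables false
set_option linter.unnecessarySimpa false

/-- `G` contains `K_{ℓ,ℓ}` as a (not necessarily induced) subgraph. -/
def ContainsKll {V : Type*} (G : SimpleGraph V) (ℓ : ℕ) : Prop :=
  ∃ A B : Finset V, Disjoint A B ∧ A.card = ℓ ∧ B.card = ℓ ∧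
    ∀ a ∈ A, ∀ b ∈ B, G.Adj a b

/-- `G` contains an induced copy of `H`. -/
def HasInducedCopy {W V : Type*} (H : SimpleGraph W) (G : SimpleGraph V) : Prop :=
  ∃ f : W ↪ V, ∀ a b : W, G.Adj (f a) (f b) ↔ H.Adj a b

/-- `S'_d`, the 1-subdivision of the star `K_{1,d}`. -/
def subdividedStar (d : ℕ) : SimpleGraph (Option (Fin d × Bool)) :=
  SimpleGraph.fromRel (fun a b =>
    (∃ i, a = none ∧ b = some (i, false)) ∨
    (∃ i, a = some (i, false) ∧ b = some (i, true)))

/-- `G` is `k`-degenerate: every nonempty induced subgraph has a vertex of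
degree at most `k`. -/
def DegeneracyLE {V : Type*} [DecidableEq V] (G : SimpleGraph V)
    [DecidableRel G.Adj] (k : ℕ) : Prop :=
  ∀ S : Finset V, S.Nonempty → ∃ v ∈ S, (S.filter (fun u => G.Adj v u)).card ≤ k

namespace Stmt4Aux




def Lam (a : ℕ) : ℕ → ℕ
  | 0 => 1
  | k+1 => a * Lam a k + 1

def Zet (a dd : ℕ) : ℕ → ℕ
  | 0 => 2 * dd * (a-1) + 2
  | k+1 => a * (Zet a dd k + 2 * (a-1)) + a + 1

lemma Lam_pos (a k : ℕ) : 1 ≤ Lam a k := by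
  cases k <;> simp [Lam]

lemma Lam_mono (a : ℕ) (ha : 1 ≤ a) {j k : ℕ} (h : j ≤ k) : Lam a j ≤ Lam a k := by
  induction k with
  | zero => simp [Nat.le_zero.mp h]
  | succ k ih =>
    rcases Nat.lt_or_ge j (k+1) with hj | hj
    · have h1 := ih (by omega)
      have h2 := Lam_pos a k
      calc Lam a j ≤ Lam a k := h1
        _ ≤ a * Lam a k + 1 := by nlinarith
        _ = Lam a (k+1) := rfl
    · have : j = k+1 := by omega
      simp [this]

lemma Lam_le_pow (a k : ℕ) : Lam a k ≤ (a+1)^k := by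
  induction k with
  | zero => simp [Lam]
  | succ k ih =>
    have h1 := Lam_pos a k
    simp only [Lam, pow_succ]
    nlinarith

lemma Lam_ge (b k : ℕ) : k * b + 1 ≤ Lam (b+1) k := by
  induction k with
  | zero => simp [Lam]
  | succ k ih =>
    have h1 := Lam_pos (b+1) k
    simp only [Lam]
    nlinarith

lemma Zet_succ (b dd k : ℕ) :
    Zet (b+1) dd (k+1) = (b+1) * Zet (b+1) dd k + (2*(b+1)*b + (b+1) + 1) := by
  simp only [Zet, Nat.add_sub_cancel]
  ring

lemma Zet_zero (b dd : ℕ) : Zet (b+1) dd 0 = 2 * dd * b + 2 := by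
  simp [Zet]

lemma Zet_ge (b dd k : ℕ) : 2 * dd * b + 2 ≤ Zet (b+1) dd k := by
  induction k with
  | zero => simp [Zet]
  | succ k ih =>
    have h : Zet (b+1) dd k ≤ (b+1) * Zet (b+1) dd k := Nat.le_mul_of_pos_left _ (by omega)
    rw [Zet_succ]
    omega

lemma Zet_le (b dd k : ℕ) :
    Zet (b+1) dd k ≤ (b+2)^k * (2 * dd * b + 2 + 2*(b+1)*k) := by
  induction k with
  | zero => simp [Zet]
  | succ k ih =>
    have hp : 1 ≤ (b+2)^k := Nat.one_le_pow _ _ (by omega)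
    have key : (b+1) * Zet (b+1) dd k ≤ (b+1) * ((b+2)^k * (2*dd*b + 2 + 2*(b+1)*k)) :=
      Nat.mul_le_mul_left _ ih
    have hps : (b+2)^(k+1) = (b+2) * (b+2)^k := by rw [pow_succ]; ring
    have h2 : 2*(b+1)*b + (b+1) + 1 ≤ (b+2)^(k+1)*(2*(b+1)) := by
      have h21 : (b+2) ≤ (b+2)^(k+1) := by
        calc b+2 = (b+2)^1 := (pow_one _).symm
        _ ≤ (b+2)^(k+1) := Nat.pow_le_pow_right (by omega) (by omega)
      nlinarith
    have h3 : 2 ≤ (b+2)^k * (2*dd*b+2+2*(b+1)*k) := by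
      have h31 : 2 ≤ 2*dd*b+2+2*(b+1)*k := by omega
      calc 2 ≤ 2*dd*b+2+2*(b+1)*k := h31
        _ ≤ (b+2)^k * (2*dd*b+2+2*(b+1)*k) := Nat.le_mul_of_pos_left _ (by omega)
    rw [Zet_succ, hps]
    nlinarith

def DD (a e : ℕ) : ℕ := a * ((a+1)^e + e * (a+1)^(e+1) + (a+1)^(2*e)) + 2

lemma R1_le_D (b e : ℕ) (he : 1 ≤ e) : (b+1) * Lam (b+1) (2*e) + (b+2) ≤ DD (b+1) e := by
  have h1 : Lam (b+1) (2*e) ≤ (b+2)^(2*e) := by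
    have := Lam_le_pow (b+1) (2*e); simpa using this
  have h2 : (b+1) * Lam (b+1) (2*e) ≤ (b+1) * (b+2)^(2*e) := Nat.mul_le_mul_left _ h1
  have h3 : 1 ≤ (b+2)^e := Nat.one_le_pow _ _ (by omega)
  have h5 : (b+1) ≤ (b+1)*(b+2)^e := Nat.le_mul_of_pos_right _ (by omega)
  unfold DD
  have hD : (b+1+1) = b+2 := rfl
  rw [hD]
  have hexp : (b+1) * ((b+2)^e + e*(b+2)^(e+1) + (b+2)^(2*e))
      = (b+1)*(b+2)^e + (b+1)*(e*(b+2)^(e+1)) + (b+1)*(b+2)^(2*e) := by ring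
  rw [hexp]
  have : 0 ≤ (b+1)*(e*(b+2)^(e+1)) := Nat.zero_le _
  omega

lemma R2_le_D (b e : ℕ) (he : 1 ≤ e) : Zet (b+1) (e+1) e + b ≤ DD (b+1) e := by
  have hZ := Zet_le b (e+1) e
  set P := (b+2)^e with hP
  clear_value P
  have hPge : b+2 ≤ P := by
    rw [hP]
    calc b+2 = (b+2)^1 := (pow_one _).symm
    _ ≤ (b+2)^e := Nat.pow_le_pow_right (by omega) he
  have hP2 : (b+2)^(2*e) = P * P := by rw [hP, ← pow_add]; congr 1; omega
  have hPe1 : (b+2)^(e+1) = P * (b+2) := by rw [hP, pow_succ]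
  have hbb : b ≤ b*b := by rcases Nat.eq_zero_or_pos b with h | h
                           · simp [h]
                           · exact Nat.le_mul_of_pos_left _ h
  have hbbe : b*e ≤ (b*b)*e := Nat.mul_le_mul_right e hbb
  have hC1 : 2*(e+1)*b + 2*(b+1)*e ≤ (b+1)*e*(b+2) + 2*(b+1) := by nlinarith
  have hPP : (b+2)*P ≤ P*P := Nat.mul_le_mul_right P hPge
  have hC2 : (b+3) * P + (b+1) ≤ (b+1) * (P * P) + 3 := by
    rcases Nat.eq_zero_or_pos b with h | h
    · subst h
      obtain ⟨Q, hQ⟩ := Nat.exists_eq_add_of_le hPge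
      subst hQ
      nlinarith
    · have h2P : 2*(b+2) ≤ 2*P := by omega
      nlinarith
  have chain : Zet (b+1) (e+1) e + b ≤ P*((b+1)*e*(b+2) + 2*(b+1) + 2) + b := by
    have := le_trans hZ (Nat.mul_le_mul_left P (by omega : 2*(e+1)*b + 2 + 2*(b+1)*e ≤ (b+1)*e*(b+2) + 2*(b+1) + 2))
    omega
  have split : P*((b+1)*e*(b+2) + 2*(b+1) + 2) + b
      = (b+1)*e*(P*(b+2)) + ((b+3)*P + (b+1)*P + b) := by ring
  have last : (b+3)*P + (b+1)*P + b ≤ (b+1)*P + (b+1)*(P*P) + 2 := by linarith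
  unfold DD
  have hD : (b+1+1) = b+2 := rfl
  rw [hD, hP2, hPe1, ← hP]
  have rhseq : (b+1) * (P + e*(P*(b+2)) + P*P) + 2
      = (b+1)*e*(P*(b+2)) + ((b+1)*P + (b+1)*(P*P) + 2) := by ring
  rw [rhseq]
  omega



section Graph
variable {V : Type*} [DecidableEq V] (G : SimpleGraph V) [DecidableRel G.Adj]





lemma kll_of {ℓ : ℕ} (X Y : Finset V) (hX : ℓ ≤ X.card) (hY : ℓ ≤ Y.card)
    (hdisj : ∀ x ∈ X, x ∉ Y) (hadj : ∀ x ∈ X, ∀ y ∈ Y, G.Adj x y) : ContainsKll G ℓ := by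
  obtain ⟨X', hX's, hX'c⟩ := Finset.exists_subset_card_eq hX
  obtain ⟨Y', hY's, hY'c⟩ := Finset.exists_subset_card_eq hY
  exact ⟨X', Y', Finset.disjoint_left.mpr (fun a ha hb => hdisj a (hX's ha) (hY's hb)),
    hX'c, hY'c, fun a ha b hb => hadj a (hX's ha) b (hY's hb)⟩

/-- Key counting lemma: in a `K_{ℓ,ℓ}`-free graph, for a pool `Y` all of whose
elements are adjacent to the anchor `u`, at most `ℓ-2` members of any set `U`
not containing `u` can "`r`-kill" `Y` (be non-adjacent to at most `r` of `Y`). -/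
lemma badcount {ℓ : ℕ} (hℓ : 2 ≤ ℓ) (u : V) (Y U : Finset V) (r : ℕ)
    (hYadj : ∀ y ∈ Y, G.Adj u y) (hUu : u ∉ U)
    (hYcard : (ℓ-1) * r + ℓ ≤ Y.card)
    (hnK : ¬ ContainsKll G ℓ) :
    (U.filter (fun x => (Y.filter (fun y => ¬ G.Adj x y)).card ≤ r)).card ≤ ℓ - 2 := by
  by_contra hcon
  push_neg at hcon
  have hT : ℓ - 1 ≤ (U.filter (fun x => (Y.filter (fun y => ¬ G.Adj x y)).card ≤ r)).card := by
    omega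
  obtain ⟨T, hTs, hTc⟩ := Finset.exists_subset_card_eq hT
  set C := Y.filter (fun y => ∀ x ∈ T, G.Adj x y) with hC
  have hCcard : ℓ ≤ C.card := by
    have hcover : Y ⊆ C ∪ (Y.filter (fun y => ¬ ∀ x ∈ T, G.Adj x y)) := by
      intro y hy
      by_cases h : ∀ x ∈ T, G.Adj x y
      · exact Finset.mem_union_left _ (Finset.mem_filter.mpr ⟨hy, h⟩)
      · exact Finset.mem_union_right _ (Finset.mem_filter.mpr ⟨hy, h⟩)
    have hsplit : Y.card ≤ C.card + (Y.filter (fun y => ¬ ∀ x ∈ T, G.Adj x y)).card :=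
      le_trans (Finset.card_le_card hcover) (Finset.card_union_le _ _)
    have hsub : Y.filter (fun y => ¬ ∀ x ∈ T, G.Adj x y) ⊆
        T.biUnion (fun x => Y.filter (fun y => ¬ G.Adj x y)) := by
      intro y hy
      simp only [Finset.mem_filter, not_forall] at hy
      obtain ⟨hyY, x, hxT, hnadj⟩ := hy
      exact Finset.mem_biUnion.mpr ⟨x, hxT, Finset.mem_filter.mpr ⟨hyY, hnadj⟩⟩
    have hbound : (Y.filter (fun y => ¬ ∀ x ∈ T, G.Adj x y)).card ≤ (ℓ-1) * r := by
      calc (Y.filter (fun y => ¬ ∀ x ∈ T, G.Adj x y)).card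
          ≤ (T.biUnion (fun x => Y.filter (fun y => ¬ G.Adj x y))).card :=
            Finset.card_le_card hsub
        _ ≤ ∑ x ∈ T, (Y.filter (fun y => ¬ G.Adj x y)).card := Finset.card_biUnion_le
        _ ≤ ∑ _x ∈ T, r := by
            apply Finset.sum_le_sum
            intro x hx
            have := hTs hx
            simp only [Finset.mem_filter] at this
            exact this.2
        _ = (ℓ-1) * r := by rw [Finset.sum_const, hTc]; ring
    omega
  have huT : u ∉ T := fun h => hUu (Finset.mem_filter.mp (hTs h)).1
  apply hnK
  apply kll_of G (insert u T) C
  · rw [Finset.card_insert_of_notMem huT, hTc]; omega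
  · exact hCcard
  · intro x hx hxC
    rcases Finset.mem_insert.mp hx with rfl | hxT
    · have := hYadj x (Finset.mem_filter.mp hxC).1
      exact G.irrefl this
    · have := (Finset.mem_filter.mp hxC).2 x hxT
      exact G.irrefl this
  · intro x hx y hy
    rcases Finset.mem_insert.mp hx with rfl | hxT
    · exact hYadj y (Finset.mem_filter.mp hy).1
    · exact (Finset.mem_filter.mp hy).2 x hxT

lemma card_filter_sum_comm (s : Finset V) (R : V → V → Prop) [DecidableRel R] :
    ∑ x ∈ s, (s.filter (fun m => R x m)).card = ∑ m ∈ s, (s.filter (fun x => R x m)).card := by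
  simp only [Finset.card_filter]
  exact Finset.sum_comm






/-- neighbours of `x` within `S` -/
def Nb (S : Finset V) (x : V) : Finset V := S.filter (fun y => G.Adj x y)

/-- the outside-pool of `m`: neighbours of `m` in `S` avoiding `A ∪ {v}` -/
def Wp (S A : Finset V) (v : V) (m : V) : Finset V :=
  (Nb G S m).filter (fun y => y ∉ A ∧ y ≠ v)

/-- remove the closed neighbourhoods of all members of `L` from `Y` -/
def clean (L : List V) (Y : Finset V) : Finset V :=
  Y.filter (fun y => ∀ x ∈ L, ¬ G.Adj x y ∧ y ≠ x)

/-- candidate pool of `m` after committing `L` -/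
def cpool (S A : Finset V) (v : V) (L : List V) (m : V) : Finset V :=
  clean G L (Wp G S A v m)

/-- committed pool of `m ∈ L`: cleaned by all of `L` except `m` itself -/
def opool (S A : Finset V) (v : V) (L : List V) (m : V) : Finset V :=
  (Wp G S A v m).filter (fun y => ∀ x ∈ L, x = m ∨ (¬ G.Adj x y ∧ y ≠ x))

lemma mem_Wp {S A : Finset V} {v m y : V} (h : y ∈ Wp G S A v m) :
    y ∈ S ∧ G.Adj m y ∧ y ∉ A ∧ y ≠ v := by
  simp only [Wp, Nb, Finset.mem_filter] at h
  tauto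

lemma clean_append (L : List V) (x : V) (Y : Finset V) :
    clean G (L ++ [x]) Y = (clean G L Y).filter (fun y => ¬ G.Adj x y ∧ y ≠ x) := by
  unfold clean
  rw [Finset.filter_filter]
  apply Finset.filter_congr
  intro y _
  constructor
  · intro h
    exact ⟨fun z hz => h z (List.mem_append.mpr (Or.inl hz)),
           h x (List.mem_append.mpr (Or.inr (List.mem_singleton.mpr rfl)))⟩
  · rintro ⟨h1, h2⟩ z hz
    rcases List.mem_append.mp hz with hz | hz
    · exact h1 z hz
    · rw [List.mem_singleton.mp hz]; exact h2

lemma cpool_append (S A : Finset V) (v : V) (L : List V) (x m : V) :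
    cpool G S A v (L ++ [x]) m = (cpool G S A v L m).filter (fun y => ¬ G.Adj x y ∧ y ≠ x) := by
  unfold cpool; exact clean_append G L x _

lemma opool_append_ne (S A : Finset V) (v : V) (L : List V) {x m : V} (hxm : x ≠ m) :
    opool G S A v (L ++ [x]) m
      = (opool G S A v L m).filter (fun y => ¬ G.Adj x y ∧ y ≠ x) := by
  unfold opool
  rw [Finset.filter_filter]
  apply Finset.filter_congr
  intro y _
  constructor
  · intro h
    refine ⟨fun z hz => h z (List.mem_append.mpr (Or.inl hz)), ?_⟩
    rcases h x (List.mem_append.mpr (Or.inr (List.mem_singleton.mpr rfl))) with h2 | h2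
    · exact absurd h2 hxm
    · exact h2
  · rintro ⟨h1, h2⟩ z hz
    rcases List.mem_append.mp hz with hz | hz
    · exact h1 z hz
    · rw [List.mem_singleton.mp hz]; exact Or.inr h2

lemma opool_append_self (S A : Finset V) (v : V) (L : List V) {x : V}
    (hx : ∀ m ∈ L, m ≠ x) :
    opool G S A v (L ++ [x]) x = cpool G S A v L x := by
  unfold opool cpool clean
  apply Finset.filter_congr
  intro y _
  constructor
  · intro h m hm
    rcases h m (List.mem_append.mpr (Or.inl hm)) with h2 | h2
    · exact absurd h2 (hx m hm)
    · exact h2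
  · intro h1 z hz
    rcases List.mem_append.mp hz with hz | hz
    · exact Or.inr (h1 z hz)
    · exact Or.inl (List.mem_singleton.mp hz)

lemma opool_subset_Wp (S A : Finset V) (v : V) (L : List V) (m : V) :
    opool G S A v L m ⊆ Wp G S A v m := Finset.filter_subset _ _

lemma cpool_subset_Wp (S A : Finset V) (v : V) (L : List V) (m : V) :
    cpool G S A v L m ⊆ Wp G S A v m := Finset.filter_subset _ _

/-- filtering by "non-adjacent and distinct" has the same card as filtering by
"non-adjacent" when `x ∉ Y`. -/
lemma filter_nonadj_card (Y : Finset V) (x : V) (hx : x ∉ Y) :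
    (Y.filter (fun y => ¬ G.Adj x y ∧ y ≠ x)) = Y.filter (fun y => ¬ G.Adj x y) := by
  apply Finset.filter_congr
  intro y hy
  have : y ≠ x := fun h => hx (h ▸ hy)
  simp [this]

/-- ... and in general the card drops by at most 1. -/
lemma filter_nonadj_card_ge (Y : Finset V) (x : V) :
    (Y.filter (fun y => ¬ G.Adj x y)).card - 1 ≤ (Y.filter (fun y => ¬ G.Adj x y ∧ y ≠ x)).card := by
  have h : (Y.filter (fun y => ¬ G.Adj x y)).erase x ⊆ Y.filter (fun y => ¬ G.Adj x y ∧ y ≠ x) := by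
    intro y hy
    obtain ⟨hne, hy⟩ := Finset.mem_erase.mp hy
    obtain ⟨h1, h2⟩ := Finset.mem_filter.mp hy
    exact Finset.mem_filter.mpr ⟨h1, h2, hne⟩
  calc (Y.filter (fun y => ¬ G.Adj x y)).card - 1
      ≤ ((Y.filter (fun y => ¬ G.Adj x y)).erase x).card := by
        rw [Finset.card_erase_eq_ite]
        split <;> omega
    _ ≤ _ := Finset.card_le_card h



end Graph
-- APPEND-SECTION: MState
section Main
variable {V : Type*} [DecidableEq V] {G : SimpleGraph V} [DecidableRel G.Adj]
variable {S A : Finset V} {v : V} {b e : ℕ}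

lemma Lam_step (b j : ℕ) : (b+1) * (Lam (b+1) j - 1) + (b+2) = Lam (b+1) (j+1) := by
  obtain ⟨L, hL⟩ : ∃ L, Lam (b+1) j = L + 1 :=
    ⟨Lam (b+1) j - 1, by have := Lam_pos (b+1) j; omega⟩
  have : Lam (b+1) (j+1) = (b+1) * Lam (b+1) j + 1 := rfl
  rw [this, hL]
  simp only [Nat.add_sub_cancel]
  ring

structure MState (G : SimpleGraph V) [DecidableRel G.Adj] (S A : Finset V) (v : V)
    (b e t : ℕ) where
  ms : List V
  len : ms.length = t
  sub : ∀ m ∈ ms, m ∈ A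
  pair : ms.Pairwise (fun x y => ¬G.Adj x y ∧ x ≠ y)
  Mc : Finset V
  McA : Mc ⊆ A
  Mcm : ∀ m ∈ ms, ∀ x ∈ Mc, ¬G.Adj m x ∧ x ≠ m
  Mcard : t ≤ e → Zet (b+1) (e+1) (e - t) ≤ Mc.card
  Mpool : ∀ x ∈ Mc, Lam (b+1) (2*e - t) ≤ (cpool G S A v ms x).card
  Opool : ∀ m ∈ ms, Lam (b+1) (2*e - t + 1) ≤ (opool G S A v ms m).card

lemma MStep (hnK : ¬ ContainsKll G (b+2)) (hAv : ∀ y ∈ A, G.Adj v y) (hvA : v ∉ A)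
    (he : 1 ≤ e) {t : ℕ} (ht : t ≤ e) (st : MState G S A v b e t) :
    Nonempty (MState G S A v b e (t+1)) := by
  classical
  obtain ⟨ms, len, sub, pair, Mc, McA, Mcm, Mcard, Mpool, Opool⟩ := st
  have hMcard : Zet (b+1) (e+1) (e - t) ≤ Mc.card := Mcard ht
  have hℓ : 2 ≤ b + 2 := by omega
  set k : ℕ := 2*e - t - 1 with hkdef
  have hk1 : 2*e - t = k + 1 := by omega
  have hk2 : 2*e - t + 1 = k + 2 := by omega
  have hk3 : 2*e - (t+1) = k := by omega
  have hk4 : 2*e - (t+1) + 1 = k + 1 := by omega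
  have hvMc : v ∉ Mc := fun h => hvA (McA h)
  have hMcAdj : ∀ y ∈ Mc, G.Adj v y := fun y hy => hAv y (McA hy)
  -- B2 : committed-pool bads
  set B2 : Finset V := Mc.filter (fun x => ∃ m ∈ ms,
      ((opool G S A v ms m).filter (fun y => ¬ G.Adj x y)).card ≤ Lam (b+1) (k+1) - 1) with hB2
  have hB2card : B2.card ≤ t * b := by
    have hsub : B2 ⊆ ms.toFinset.biUnion (fun m => Mc.filter (fun x =>
        ((opool G S A v ms m).filter (fun y => ¬ G.Adj x y)).card ≤ Lam (b+1) (k+1) - 1)) := by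
      intro x hx
      rw [hB2, Finset.mem_filter] at hx
      obtain ⟨hxM, m, hm, hcard⟩ := hx
      exact Finset.mem_biUnion.mpr ⟨m, List.mem_toFinset.mpr hm,
        Finset.mem_filter.mpr ⟨hxM, hcard⟩⟩
    have heach : ∀ m ∈ ms.toFinset, (Mc.filter (fun x =>
        ((opool G S A v ms m).filter (fun y => ¬ G.Adj x y)).card ≤ Lam (b+1) (k+1) - 1)).card
        ≤ b := by
      intro m hm
      have hmms : m ∈ ms := List.mem_toFinset.mp hm
      have hmMc : m ∉ Mc := fun hc => (Mcm m hmms m hc).2 rfl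
      have hYadj : ∀ y ∈ opool G S A v ms m, G.Adj m y := fun y hy =>
        (mem_Wp G (opool_subset_Wp G S A v ms m hy)).2.1
      have hYcard : (b+2-1) * (Lam (b+1) (k+1) - 1) + (b+2)
          ≤ (opool G S A v ms m).card := by
        have h1 : (b+2-1) = b+1 := by omega
        rw [h1, Lam_step]
        have := Opool m hmms
        rw [hk2] at this
        exact this
      have := badcount G hℓ m (opool G S A v ms m) Mc (Lam (b+1) (k+1) - 1) hYadj hmMc
        hYcard hnK
      simpa using this
    calc B2.card ≤ _ := Finset.card_le_card hsub
      _ ≤ ∑ m ∈ ms.toFinset, (Mc.filter (fun x =>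
          ((opool G S A v ms m).filter (fun y => ¬ G.Adj x y)).card
            ≤ Lam (b+1) (k+1) - 1)).card := Finset.card_biUnion_le
      _ ≤ ∑ _m ∈ ms.toFinset, b := Finset.sum_le_sum heach
      _ = ms.toFinset.card * b := by rw [Finset.sum_const, smul_eq_mul]
      _ ≤ t * b := Nat.mul_le_mul_right b (len ▸ ms.toFinset_card_le)
  -- self bads
  set rM : ℕ := Zet (b+1) (e+1) (e - t - 1) + 2*b with hrM
  set B1 : Finset V := Mc.filter (fun x =>
      (Mc.filter (fun y => ¬ G.Adj x y)).card ≤ rM) with hB1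
  have hB1card : t < e → B1.card ≤ b := by
    intro hlt
    have hYcard : (b+2-1) * rM + (b+2) ≤ Mc.card := by
      have h1 : (b+2-1) = b+1 := by omega
      have hzs : Zet (b+1) (e+1) ((e - t - 1)+1) =
          (b+1) * Zet (b+1) (e+1) (e-t-1) + (2*(b+1)*b + (b+1) + 1) := Zet_succ b (e+1) _
      have he1 : (e - t - 1) + 1 = e - t := by omega
      rw [he1] at hzs
      rw [h1, hrM]
      calc (b+1) * (Zet (b+1) (e+1) (e - t - 1) + 2*b) + (b+2)
          = (b+1) * Zet (b+1) (e+1) (e-t-1) + (2*(b+1)*b + (b+1) + 1) := by ring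
        _ = Zet (b+1) (e+1) (e - t) := hzs.symm
        _ ≤ Mc.card := hMcard
    have := badcount G hℓ v Mc Mc rM hMcAdj hvMc hYcard hnK
    simpa using this
  -- domination counts
  have hdomsum : ∑ x ∈ Mc, (Mc.filter (fun m => m ≠ x ∧
      ((cpool G S A v ms m).filter (fun y => ¬ G.Adj x y)).card ≤ Lam (b+1) k - 1)).card
      ≤ b * Mc.card := by
    have hswap := card_filter_sum_comm Mc (fun x m => m ≠ x ∧
      ((cpool G S A v ms m).filter (fun y => ¬ G.Adj x y)).card ≤ Lam (b+1) k - 1)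
    rw [hswap]
    have heach : ∀ m ∈ Mc, (Mc.filter (fun x => m ≠ x ∧
        ((cpool G S A v ms m).filter (fun y => ¬ G.Adj x y)).card ≤ Lam (b+1) k - 1)).card
        ≤ b := by
      intro m hm
      have hYadj : ∀ y ∈ cpool G S A v ms m, G.Adj m y := fun y hy =>
        (mem_Wp G (cpool_subset_Wp G S A v ms m hy)).2.1
      have hYcard : (b+2-1) * (Lam (b+1) k - 1) + (b+2) ≤ (cpool G S A v ms m).card := by
        have h1 : (b+2-1) = b+1 := by omega
        rw [h1, Lam_step]
        have := Mpool m hm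
        rw [hk1] at this
        exact this
      have hbc := badcount G hℓ m (cpool G S A v ms m) (Mc.erase m) (Lam (b+1) k - 1)
        hYadj (Finset.notMem_erase m Mc) hYcard hnK
      have hsub2 : Mc.filter (fun x => m ≠ x ∧
          ((cpool G S A v ms m).filter (fun y => ¬ G.Adj x y)).card ≤ Lam (b+1) k - 1)
          ⊆ (Mc.erase m).filter (fun x =>
          ((cpool G S A v ms m).filter (fun y => ¬ G.Adj x y)).card ≤ Lam (b+1) k - 1) := by
        intro x hx
        rw [Finset.mem_filter] at hx
        exact Finset.mem_filter.mpr ⟨Finset.mem_erase.mpr ⟨fun hh => hx.2.1 hh.symm, hx.1⟩,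
          hx.2.2⟩
      calc _ ≤ _ := Finset.card_le_card hsub2
        _ ≤ b := by simpa using hbc
    calc ∑ m ∈ Mc, (Mc.filter (fun x => m ≠ x ∧
          ((cpool G S A v ms m).filter (fun y => ¬ G.Adj x y)).card ≤ Lam (b+1) k - 1)).card
        ≤ ∑ _m ∈ Mc, b := Finset.sum_le_sum heach
      _ = b * Mc.card := by rw [Finset.sum_const, smul_eq_mul, Nat.mul_comm]
  set B3 : Finset V := Mc.filter (fun x => 2*b+1 ≤ (Mc.filter (fun m => m ≠ x ∧
      ((cpool G S A v ms m).filter (fun y => ¬ G.Adj x y)).card ≤ Lam (b+1) k - 1)).card)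
    with hB3
  have hB3card : 2 * B3.card ≤ Mc.card := by
    have hlow : B3.card * (2*b+1) ≤ ∑ x ∈ B3, (Mc.filter (fun m => m ≠ x ∧
        ((cpool G S A v ms m).filter (fun y => ¬ G.Adj x y)).card ≤ Lam (b+1) k - 1)).card := by
      calc B3.card * (2*b+1) = ∑ _x ∈ B3, (2*b+1) := by rw [Finset.sum_const, smul_eq_mul]
        _ ≤ _ := Finset.sum_le_sum (fun x hx => (Finset.mem_filter.mp hx).2)
    have hsub3 : ∑ x ∈ B3, (Mc.filter (fun m => m ≠ x ∧
        ((cpool G S A v ms m).filter (fun y => ¬ G.Adj x y)).card ≤ Lam (b+1) k - 1)).card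
        ≤ ∑ x ∈ Mc, (Mc.filter (fun m => m ≠ x ∧
        ((cpool G S A v ms m).filter (fun y => ¬ G.Adj x y)).card ≤ Lam (b+1) k - 1)).card :=
      Finset.sum_le_sum_of_subset (Finset.filter_subset _ _)
    have hall : B3.card * (2*b+1) ≤ b * Mc.card := le_trans hlow (le_trans hsub3 hdomsum)
    rcases Nat.eq_zero_or_pos b with hb | hb
    · subst hb
      simp only [Nat.zero_mul] at hall
      omega
    · have h1 : (2 * B3.card) * b ≤ Mc.card * b := by nlinarith
      exact Nat.le_of_mul_le_mul_right h1 hb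
  -- selection of the pick x
  have hsel : ∃ x ∈ Mc, (x ∉ B2) ∧ (t < e → x ∉ B1) ∧ (t < e → x ∉ B3) := by
    rcases Nat.lt_or_ge t e with hlt | hge
    · have hcard3 : (Mc \ (B1 ∪ B2 ∪ B3)).Nonempty := by
        rw [← Finset.card_pos]
        have h1 : (B1 ∪ B2 ∪ B3).card ≤ B1.card + B2.card + B3.card := by
          calc (B1 ∪ B2 ∪ B3).card ≤ (B1 ∪ B2).card + B3.card := Finset.card_union_le _ _
            _ ≤ B1.card + B2.card + B3.card := by
                have := Finset.card_union_le B1 B2; omega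
        have h2 : Mc.card - (B1 ∪ B2 ∪ B3).card ≤ (Mc \ (B1 ∪ B2 ∪ B3)).card :=
          Finset.le_card_sdiff _ _
        have h3 := hB1card hlt
        have hzge := Zet_ge b (e+1) (e - t)
        have htb : t * b ≤ e * b := Nat.mul_le_mul_right b (by omega)
        have hq : 2*(e+1)*b = 2*(e*b) + 2*b := by ring
        omega
      obtain ⟨x, hx⟩ := hcard3
      rw [Finset.mem_sdiff] at hx
      obtain ⟨hxMc, hxB⟩ := hx
      rw [Finset.mem_union, Finset.mem_union] at hxB
      push_neg at hxB
      exact ⟨x, hxMc, hxB.1.2, fun _ => hxB.1.1, fun _ => hxB.2⟩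
    · have hcard2 : (Mc \ B2).Nonempty := by
        rw [← Finset.card_pos]
        have h2 : Mc.card - B2.card ≤ (Mc \ B2).card := Finset.le_card_sdiff _ _
        have hzge := Zet_ge b (e+1) (e - t)
        have htb : t * b ≤ e * b := Nat.mul_le_mul_right b (by omega)
        have hq : 2*(e+1)*b = 2*(e*b) + 2*b := by ring
        omega
      obtain ⟨x, hx⟩ := hcard2
      rw [Finset.mem_sdiff] at hx
      exact ⟨x, hx.1, hx.2, fun h => absurd h (by omega), fun h => absurd h (by omega)⟩
  obtain ⟨x, hxMc, hxB2, hxB1, hxB3⟩ := hsel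
  have hxA : x ∈ A := McA hxMc
  -- new state
  refine ⟨⟨ms ++ [x], ?_, ?_, ?_,
    Mc.filter (fun y => (¬G.Adj x y ∧ y ≠ x) ∧
      Lam (b+1) k ≤ ((cpool G S A v ms y).filter (fun z => ¬ G.Adj x z)).card),
    ?_, ?_, ?_, ?_, ?_⟩⟩
  · simp [len]
  · intro m hm
    rcases List.mem_append.mp hm with h | h
    · exact sub m h
    · rw [List.mem_singleton.mp h]; exact hxA
  · rw [List.pairwise_append]
    refine ⟨pair, List.pairwise_singleton _ _, ?_⟩
    intro a ha x' hx'
    rw [List.mem_singleton.mp hx']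
    obtain ⟨h1, h2⟩ := Mcm a ha x hxMc
    exact ⟨h1, h2.symm⟩
  · exact le_trans (Finset.filter_subset _ _) (le_of_eq rfl) |>.trans McA
  · intro m hm y hy
    rw [Finset.mem_filter] at hy
    rcases List.mem_append.mp hm with h | h
    · exact Mcm m h y hy.1
    · rw [List.mem_singleton.mp h]
      exact ⟨hy.2.1.1, hy.2.1.2⟩
  · -- Mcard for t+1
    intro ht1
    have hlt : t < e := by omega
    have hxB1' := hxB1 hlt
    have hxB3' := hxB3 hlt
    have hnadj : rM + 1 ≤ (Mc.filter (fun y => ¬ G.Adj x y)).card := by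
      rw [hB1] at hxB1'
      by_contra hcon
      exact hxB1' (Finset.mem_filter.mpr ⟨hxMc, by omega⟩)
    have hdom : (Mc.filter (fun m => m ≠ x ∧
        ((cpool G S A v ms m).filter (fun y => ¬ G.Adj x y)).card ≤ Lam (b+1) k - 1)).card
        ≤ 2*b := by
      rw [hB3] at hxB3'
      by_contra hcon
      exact hxB3' (Finset.mem_filter.mpr ⟨hxMc, by omega⟩)
    -- |Mc.filter P| ≥ rM + 1 - 1 = rM
    have hP : rM ≤ (Mc.filter (fun y => ¬G.Adj x y ∧ y ≠ x)).card := by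
      have := filter_nonadj_card_ge G Mc x
      omega
    -- survivors
    have hsurv : (Mc.filter (fun y => ¬G.Adj x y ∧ y ≠ x)).card - (Mc.filter (fun m => m ≠ x ∧
        ((cpool G S A v ms m).filter (fun y => ¬ G.Adj x y)).card ≤ Lam (b+1) k - 1)).card ≤
        (Mc.filter (fun y => (¬G.Adj x y ∧ y ≠ x) ∧
          Lam (b+1) k ≤ ((cpool G S A v ms y).filter (fun z => ¬ G.Adj x z)).card)).card := by
      have hsub : (Mc.filter (fun y => ¬G.Adj x y ∧ y ≠ x)) \
          (Mc.filter (fun m => m ≠ x ∧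
            ((cpool G S A v ms m).filter (fun y => ¬ G.Adj x y)).card ≤ Lam (b+1) k - 1))
          ⊆ Mc.filter (fun y => (¬G.Adj x y ∧ y ≠ x) ∧
            Lam (b+1) k ≤ ((cpool G S A v ms y).filter (fun z => ¬ G.Adj x z)).card) := by
        intro y hy
        rw [Finset.mem_sdiff, Finset.mem_filter, Finset.mem_filter] at hy
        push_neg at hy
        obtain ⟨⟨hyMc, hyP⟩, hyn⟩ := hy
        refine Finset.mem_filter.mpr ⟨hyMc, hyP, ?_⟩
        have := hyn hyMc hyP.2
        have hLpos := Lam_pos (b+1) k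
        omega
      calc (Mc.filter (fun y => ¬G.Adj x y ∧ y ≠ x)).card - (Mc.filter (fun m => m ≠ x ∧
            ((cpool G S A v ms m).filter (fun y => ¬ G.Adj x y)).card ≤ Lam (b+1) k - 1)).card
          ≤ ((Mc.filter (fun y => ¬G.Adj x y ∧ y ≠ x)) \
            (Mc.filter (fun m => m ≠ x ∧
            ((cpool G S A v ms m).filter (fun y => ¬ G.Adj x y)).card ≤ Lam (b+1) k - 1))).card :=
            Finset.le_card_sdiff _ _
        _ ≤ _ := Finset.card_le_card hsub
    have heq : e - (t+1) = e - t - 1 := by omega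
    rw [heq]
    omega
  · -- Mpool for t+1
    intro y hy
    rw [Finset.mem_filter] at hy
    obtain ⟨hyMc, hyP, hyL⟩ := hy
    rw [hk3, cpool_append]
    have hxnot : x ∉ cpool G S A v ms y := fun h =>
      (mem_Wp G (cpool_subset_Wp G S A v ms y h)).2.2.1 hxA
    rw [filter_nonadj_card G _ x hxnot]
    exact hyL
  · -- Opool for t+1
    intro m hm
    rw [hk4]
    rcases List.mem_append.mp hm with h | h
    · have hxm : x ≠ m := (Mcm m h x hxMc).2
      rw [opool_append_ne G S A v ms hxm]
      have hxnot : x ∉ opool G S A v ms m := fun hh =>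
        (mem_Wp G (opool_subset_Wp G S A v ms m hh)).2.2.1 hxA
      rw [filter_nonadj_card G _ x hxnot]
      rw [hB2] at hxB2
      have : ∀ m' ∈ ms, ¬(((opool G S A v ms m').filter (fun y => ¬ G.Adj x y)).card
          ≤ Lam (b+1) (k+1) - 1) := by
        intro m' hm' hcon
        exact hxB2 (Finset.mem_filter.mpr ⟨hxMc, ⟨m', hm', hcon⟩⟩)
      have := this m h
      have hLpos := Lam_pos (b+1) (k+1)
      omega
    · rw [List.mem_singleton.mp h]
      rw [opool_append_self G S A v ms (fun m' hm' => (Mcm m' hm' x hxMc).2.symm)]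
      have := Mpool x hxMc
      rw [hk1] at this
      exact this

-- APPEND-SECTION: WState
lemma clean_nil (Y : Finset V) : clean G ([] : List V) Y = Y := by
  unfold clean
  apply Finset.filter_true_of_mem
  intro y _
  simp

lemma MInit (hnK : ¬ ContainsKll G (b+2)) (hAv : ∀ y ∈ A, G.Adj v y) (hvA : v ∉ A)
    (he : 1 ≤ e)
    (hA1 : (b+1) * Lam (b+1) (2*e) + (b+2) ≤ A.card)
    (hA2 : Zet (b+1) (e+1) e + b ≤ A.card)
    (hWp : ∀ m ∈ A, (A.filter (fun y => ¬ G.Adj m y)).card - 1 ≤ (Wp G S A v m).card) :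
    Nonempty (MState G S A v b e 0) := by
  classical
  have hℓ : 2 ≤ b + 2 := by omega
  set M0 : Finset V := A.filter (fun m =>
    ¬((A.filter (fun y => ¬ G.Adj m y)).card ≤ Lam (b+1) (2*e))) with hM0
  have hbads : (A.filter (fun m =>
      (A.filter (fun y => ¬ G.Adj m y)).card ≤ Lam (b+1) (2*e))).card ≤ b := by
    have hYcard : (b+2-1) * Lam (b+1) (2*e) + (b+2) ≤ A.card := by
      have h1 : (b+2-1) = b+1 := by omega
      rw [h1]; exact hA1
    have := badcount G hℓ v A A (Lam (b+1) (2*e)) hAv hvA hYcard hnK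
    simpa using this
  have hM0card : Zet (b+1) (e+1) e ≤ M0.card := by
    have := Finset.card_filter_add_card_filter_not
      (s := A) (fun m => (A.filter (fun y => ¬ G.Adj m y)).card ≤ Lam (b+1) (2*e))
    rw [hM0]
    omega
  refine ⟨⟨[], rfl, by simp, List.Pairwise.nil, M0, Finset.filter_subset _ _, by simp, ?_, ?_,
    by simp⟩⟩
  · intro _
    simpa using hM0card
  · intro x hx
    rw [hM0, Finset.mem_filter] at hx
    obtain ⟨hxA, hxcard⟩ := hx
    have h1 := hWp x hxA
    unfold cpool
    rw [clean_nil]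
    have h2 : 2*e - 0 = 2*e := by omega
    rw [h2]
    omega

lemma Mphase (hnK : ¬ ContainsKll G (b+2)) (hAv : ∀ y ∈ A, G.Adj v y) (hvA : v ∉ A)
    (he : 1 ≤ e)
    (hA1 : (b+1) * Lam (b+1) (2*e) + (b+2) ≤ A.card)
    (hA2 : Zet (b+1) (e+1) e + b ≤ A.card)
    (hWp : ∀ m ∈ A, (A.filter (fun y => ¬ G.Adj m y)).card - 1 ≤ (Wp G S A v m).card) :
    Nonempty (MState G S A v b e (e+1)) := by
  have key : ∀ t : ℕ, t ≤ e + 1 → Nonempty (MState G S A v b e t) := by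
    intro t
    induction t with
    | zero => exact fun _ => MInit hnK hAv hvA he hA1 hA2 hWp
    | succ t ih =>
      intro h
      obtain ⟨st⟩ := ih (by omega)
      exact MStep hnK hAv hvA he (by omega) st
  exact key (e+1) le_rfl

structure WState (G : SimpleGraph V) [DecidableRel G.Adj] (S A : Finset V) (v : V)
    (b e : ℕ) (msF : List V) (i : ℕ) where
  ws : List V
  len : ws.length = i
  wmem : ∀ k, k < i → ws.getD k v ∈ clean G (ws.take k) (opool G S A v msF (msF.getD k v))
  wpair : ws.Pairwise (fun x y => ¬G.Adj x y ∧ x ≠ y)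
  pools : ∀ j, i ≤ j → j < msF.length →
    Lam (b+1) (e - i) ≤ (clean G ws (opool G S A v msF (msF.getD j v))).card

lemma WStep (hnK : ¬ ContainsKll G (b+2)) {msF : List V}
    (hlen : msF.length = e + 1)
    (hsubA : ∀ m ∈ msF, m ∈ A)
    (hdist : ∀ (j1 j2 : ℕ), j1 < msF.length → j2 < msF.length → j1 ≠ j2 →
      msF.getD j1 v ≠ msF.getD j2 v)
    {i : ℕ} (hi : i < msF.length)
    (st : WState G S A v b e msF i) : Nonempty (WState G S A v b e msF (i+1)) := by
  classical
  obtain ⟨ws, len, wmem, wpair, pools⟩ := st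
  have hℓ : 2 ≤ b + 2 := by omega
  have hie : i ≤ e := by omega
  set mi := msF.getD i v with hmi
  have hmiA : mi ∈ A := hsubA mi (by rw [hmi, List.getD_eq_getElem msF v hi]; exact List.getElem_mem hi)
  set U : Finset V := clean G ws (opool G S A v msF mi) with hU
  have hUcard : Lam (b+1) (e - i) ≤ U.card := pools i le_rfl hi
  have hUWp : ∀ x ∈ U, x ∈ Wp G S A v mi := fun x hx =>
    opool_subset_Wp G S A v msF mi (Finset.mem_filter.mp hx).1
  -- bads for pending pools
  set B : Finset V := U.filter (fun x => ∃ j ∈ Finset.range msF.length, i < j ∧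
    ((clean G ws (opool G S A v msF (msF.getD j v))).filter
      (fun y => ¬ G.Adj x y)).card ≤ Lam (b+1) (e - i - 1) - 1) with hB
  have hBcard : B.card ≤ (e - i) * b := by
    have hsub : B ⊆ ((Finset.range msF.length).filter (fun j => i < j)).biUnion
        (fun j => U.filter (fun x =>
          ((clean G ws (opool G S A v msF (msF.getD j v))).filter
            (fun y => ¬ G.Adj x y)).card ≤ Lam (b+1) (e - i - 1) - 1)) := by
      intro x hx
      rw [hB, Finset.mem_filter] at hx
      obtain ⟨hxU, j, hjr, hij, hcard⟩ := hx
      exact Finset.mem_biUnion.mpr ⟨j, Finset.mem_filter.mpr ⟨hjr, hij⟩,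
        Finset.mem_filter.mpr ⟨hxU, hcard⟩⟩
    have heach : ∀ j ∈ (Finset.range msF.length).filter (fun j => i < j),
        (U.filter (fun x =>
          ((clean G ws (opool G S A v msF (msF.getD j v))).filter
            (fun y => ¬ G.Adj x y)).card ≤ Lam (b+1) (e - i - 1) - 1)).card ≤ b := by
      intro j hj
      rw [Finset.mem_filter, Finset.mem_range] at hj
      obtain ⟨hjlen, hij⟩ := hj
      set mj := msF.getD j v with hmj
      have hmjA : mj ∈ A := hsubA mj (by rw [hmj, List.getD_eq_getElem msF v hjlen]; exact List.getElem_mem hjlen)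
      have hYadj : ∀ y ∈ clean G ws (opool G S A v msF mj), G.Adj mj y := fun y hy =>
        (mem_Wp G (opool_subset_Wp G S A v msF mj (Finset.mem_filter.mp hy).1)).2.1
      have hmjU : mj ∉ U := fun h => (mem_Wp G (hUWp mj h)).2.2.1 hmjA
      have hYcard : (b+2-1) * (Lam (b+1) (e - i - 1) - 1) + (b+2)
          ≤ (clean G ws (opool G S A v msF mj)).card := by
        have h1 : (b+2-1) = b+1 := by omega
        have h2 : (e - i - 1) + 1 = e - i := by omega
        rw [h1, Lam_step, h2]
        exact pools j (by omega) hjlen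
      have := badcount G hℓ mj (clean G ws (opool G S A v msF mj)) U
        (Lam (b+1) (e - i - 1) - 1) hYadj hmjU hYcard hnK
      simpa using this
    have hcardrange : ((Finset.range msF.length).filter (fun j => i < j)).card = e - i := by
      have : ((Finset.range msF.length).filter (fun j => i < j)) = Finset.Ico (i+1) msF.length := by
        ext j
        simp only [Finset.mem_filter, Finset.mem_range, Finset.mem_Ico]
        omega
      rw [this, Nat.card_Ico]
      omega
    calc B.card ≤ _ := Finset.card_le_card hsub
      _ ≤ ∑ j ∈ (Finset.range msF.length).filter (fun j => i < j), (U.filter (fun x =>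
          ((clean G ws (opool G S A v msF (msF.getD j v))).filter
            (fun y => ¬ G.Adj x y)).card ≤ Lam (b+1) (e - i - 1) - 1)).card :=
        Finset.card_biUnion_le
      _ ≤ ∑ _j ∈ (Finset.range msF.length).filter (fun j => i < j), b :=
        Finset.sum_le_sum heach
      _ = (e - i) * b := by rw [Finset.sum_const, smul_eq_mul, hcardrange]
  -- pick w
  have hw : (U \ B).Nonempty := by
    rw [← Finset.card_pos]
    have h1 : U.card - B.card ≤ (U \ B).card := Finset.le_card_sdiff _ _
    have h2 := Lam_ge b (e - i)
    omega
  obtain ⟨w, hw⟩ := hw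
  rw [Finset.mem_sdiff] at hw
  obtain ⟨hwU, hwB⟩ := hw
  have hwnotB : ∀ j, j < msF.length → i < j →
      Lam (b+1) (e - i - 1) ≤
      ((clean G ws (opool G S A v msF (msF.getD j v))).filter (fun y => ¬ G.Adj w y)).card := by
    intro j hjlen hij
    rw [hB] at hwB
    by_contra hcon
    have hLpos := Lam_pos (b+1) (e - i - 1)
    exact hwB (Finset.mem_filter.mpr ⟨hwU, ⟨j, Finset.mem_range.mpr hjlen, hij, by omega⟩⟩)
  -- w properties from U
  have hwOp : w ∈ opool G S A v msF mi := (Finset.mem_filter.mp hwU).1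
  have hwclean : ∀ x ∈ ws, ¬G.Adj x w ∧ w ≠ x := (Finset.mem_filter.mp hwU).2
  have hwWp : w ∈ Wp G S A v mi := opool_subset_Wp G S A v msF mi hwOp
  have hwAdjmi : G.Adj mi w := (mem_Wp G hwWp).2.1
  -- w is not in any pending pool (it is adjacent to mi)
  have hwnotpool : ∀ j, j < msF.length → j ≠ i →
      w ∉ clean G ws (opool G S A v msF (msF.getD j v)) := by
    intro j hjlen hji hcon
    have hop : w ∈ opool G S A v msF (msF.getD j v) := (Finset.mem_filter.mp hcon).1
    have := (Finset.mem_filter.mp hop).2 mi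
      (by rw [hmi, List.getD_eq_getElem msF v hi]; exact List.getElem_mem hi)
    rcases this with h | h
    · rw [hmi] at h
      exact hdist i j hi hjlen (fun hh => hji hh.symm) h
    · exact h.1 hwAdjmi
  refine ⟨⟨ws ++ [w], by simp [len], ?_, ?_, ?_⟩⟩
  · -- wmem
    intro k hk
    rcases Nat.lt_or_ge k i with hki | hki
    · have h1 : (ws ++ [w]).getD k v = ws.getD k v := List.getD_append ws [w] v k (by omega)
      have h2 : (ws ++ [w]).take k = ws.take k := List.take_append_of_le_length (by omega)
      rw [h1, h2]
      exact wmem k hki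
    · have hkeq : k = i := by omega
      subst hkeq
      have h1 : (ws ++ [w]).getD k v = w := by
        have : k = ws.length := by omega
        subst this
        simpa using List.getD_append_right ws [w] (n := ws.length) (d := v) le_rfl
      have h2 : (ws ++ [w]).take k = ws := by
        have : k = ws.length := by omega
        subst this
        exact List.take_left
      rw [h1, h2, ← hmi]
      exact hwU
  · -- pairwise
    rw [List.pairwise_append]
    refine ⟨wpair, List.pairwise_singleton _ _, ?_⟩
    intro a ha x' hx'
    rw [List.mem_singleton.mp hx']
    obtain ⟨h1, h2⟩ := hwclean a ha
    exact ⟨h1, h2.symm⟩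
  · -- pools
    intro j hij hjlen
    have hij' : i < j := by omega
    have heq : clean G (ws ++ [w]) (opool G S A v msF (msF.getD j v)) =
        (clean G ws (opool G S A v msF (msF.getD j v))).filter (fun y => ¬ G.Adj w y ∧ y ≠ w) :=
      clean_append G ws w _
    rw [heq, filter_nonadj_card G _ w (hwnotpool j hjlen (by omega))]
    have h3 : e - (i+1) = e - i - 1 := by omega
    rw [h3]
    exact hwnotB j hjlen hij'
-- APPEND-SECTION: embedding

lemma star_none_some (d : ℕ) (j : Fin d) (bb : Bool) :
    (subdividedStar d).Adj none (some (j, bb)) ↔ bb = false := by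
  rw [subdividedStar, SimpleGraph.fromRel_adj]
  constructor
  · rintro ⟨-, (⟨i, -, h2⟩ | ⟨i, h1, -⟩) | (⟨i, h1, -⟩ | ⟨i, -, h2⟩)⟩
    · simp only [Option.some.injEq, Prod.mk.injEq] at h2
      exact h2.2
    · exact nomatch h1
    · exact nomatch h1
    · exact nomatch h2
  · rintro rfl
    exact ⟨by simp, Or.inl (Or.inl ⟨j, rfl, rfl⟩)⟩

lemma star_some_some (d : ℕ) (i j : Fin d) (bi bj : Bool) :
    (subdividedStar d).Adj (some (i,bi)) (some (j,bj)) ↔ (i = j ∧ bi ≠ bj) := by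
  rw [subdividedStar, SimpleGraph.fromRel_adj]
  constructor
  · rintro ⟨hne, (⟨i', h1, -⟩ | ⟨i', h1, h2⟩) | (⟨i', h1, -⟩ | ⟨i', h1, h2⟩)⟩
    · exact nomatch h1
    · simp only [Option.some.injEq, Prod.mk.injEq] at h1 h2
      refine ⟨by rw [h1.1, h2.1], ?_⟩
      rw [h1.2, h2.2]; simp
    · exact nomatch h1
    · simp only [Option.some.injEq, Prod.mk.injEq] at h1 h2
      refine ⟨by rw [h1.1, h2.1], ?_⟩
      rw [h1.2, h2.2]; simp
  · rintro ⟨rfl, hne⟩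
    refine ⟨by simp [hne], ?_⟩
    match bi, bj, hne with
    | false, true, _ => exact Or.inl (Or.inr ⟨i, rfl, rfl⟩)
    | true, false, _ => exact Or.inr (Or.inr ⟨i, rfl, rfl⟩)
    | false, false, h => exact absurd rfl h
    | true, true, h => exact absurd rfl h

lemma star_none_none (d : ℕ) : ¬ (subdividedStar d).Adj none none := fun h => h.ne rfl
lemma pairwise_getD {R : V → V → Prop} {l : List V} (h : l.Pairwise R) (d : V)
    (i j : ℕ) (hi : i < l.length) (hj : j < l.length) (hij : i < j) :
    R (l.getD i d) (l.getD j d) := by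
  rw [List.getD_eq_getElem l d hi, List.getD_eq_getElem l d hj]
  have := List.pairwise_iff_get.mp h ⟨i, hi⟩ ⟨j, hj⟩ hij
  simpa using this

lemma final_embed
    (hAv : ∀ y ∈ A, G.Adj v y) (hvA : v ∉ A)
    (hAS : ∀ y, y ∈ A ↔ y ∈ S ∧ G.Adj v y)
    (msF ws : List V)
    (hmlen : msF.length = e+1) (hwlen : ws.length = e+1)
    (hmA : ∀ m ∈ msF, m ∈ A)
    (hmpair : msF.Pairwise (fun x y => ¬G.Adj x y ∧ x ≠ y))
    (hwpair : ws.Pairwise (fun x y => ¬G.Adj x y ∧ x ≠ y))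
    (hwmem : ∀ k, k < e+1 → ws.getD k v ∈ opool G S A v msF (msF.getD k v)) :
    HasInducedCopy (subdividedStar (e+1)) G := by
  classical
  set m : ℕ → V := fun i => msF.getD i v with hm
  set w : ℕ → V := fun k => ws.getD k v with hwdef
  have hmmem : ∀ i, i < e+1 → m i ∈ msF := by
    intro i hi
    rw [hm]
    simp only []
    rw [List.getD_eq_getElem msF v (by omega)]
    exact List.getElem_mem _
  have hmAi : ∀ i, i < e+1 → m i ∈ A := fun i hi => hmA _ (hmmem i hi)
  have hAdjvm : ∀ i, i < e+1 → G.Adj v (m i) := fun i hi => hAv _ (hmAi i hi)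
  have hwWp : ∀ k, k < e+1 → w k ∈ Wp G S A v (m k) := fun k hk =>
    opool_subset_Wp G S A v msF (m k) (hwmem k hk)
  have hwS : ∀ k, k < e+1 → (w k) ∈ S ∧ G.Adj (m k) (w k) ∧ (w k) ∉ A ∧ (w k) ≠ v :=
    fun k hk => mem_Wp G (hwWp k hk)
  have hnadjvw : ∀ k, k < e+1 → ¬ G.Adj v (w k) := by
    intro k hk hcon
    exact (hwS k hk).2.2.1 ((hAS (w k)).mpr ⟨(hwS k hk).1, hcon⟩)
  have hmdist : ∀ i j, i < e+1 → j < e+1 → i ≠ j → (¬G.Adj (m i) (m j) ∧ m i ≠ m j) := by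
    intro i j hi hj hij
    rcases Nat.lt_or_ge i j with h | h
    · exact pairwise_getD hmpair v i j (by omega) (by omega) h
    · have h2 := pairwise_getD hmpair v j i (by omega) (by omega) (by omega)
      exact ⟨fun hc => h2.1 hc.symm, fun hc => h2.2 hc.symm⟩
  have hwdist : ∀ i j, i < e+1 → j < e+1 → i ≠ j → (¬G.Adj (w i) (w j) ∧ w i ≠ w j) := by
    intro i j hi hj hij
    rcases Nat.lt_or_ge i j with h | h
    · exact pairwise_getD hwpair v i j (by omega) (by omega) h
    · have h2 := pairwise_getD hwpair v j i (by omega) (by omega) (by omega)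
      exact ⟨fun hc => h2.1 hc.symm, fun hc => h2.2 hc.symm⟩
  have hwnadjm : ∀ k j, k < e+1 → j < e+1 → j ≠ k → (¬G.Adj (m j) (w k) ∧ w k ≠ m j) := by
    intro k j hk hj hjk
    have hpred := (Finset.mem_filter.mp (hwmem k hk)).2
    have := hpred (m j) (hmmem j hj)
    rcases this with h | h
    · exact absurd h (hmdist j k hj hk hjk).2
    · exact h
  have hvm : ∀ i, i < e+1 → v ≠ m i := by
    intro i hi hcon
    exact hvA (hcon ▸ hmAi i hi)
  have hmw : ∀ i k, i < e+1 → k < e+1 → m i ≠ w k := by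
    intro i k hi hk hcon
    exact (hwS k hk).2.2.1 (hcon ▸ hmAi i hi)
  -- the embedding function
  set f : Option (Fin (e+1) × Bool) → V := fun o =>
    Option.elim o v (fun p => Bool.rec (m p.1.val) (w p.1.val) p.2) with hf
  have hfnone : f none = v := rfl
  have hffalse : ∀ i : Fin (e+1), f (some (i, false)) = m i.val := fun i => rfl
  have hftrue : ∀ i : Fin (e+1), f (some (i, true)) = w i.val := fun i => rfl
  have hinj : Function.Injective f := by
    clear_value m w
    intro a b hab
    match a, b with
    | none, none => rfl
    | none, some (j, false) => exact absurd hab (hvm j.val j.isLt)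
    | none, some (j, true) => exact absurd hab (fun h => (hwS j.val j.isLt).2.2.2 h.symm)
    | some (i, false), none => exact absurd hab.symm (hvm i.val i.isLt)
    | some (i, true), none => exact absurd hab.symm (fun h => (hwS i.val i.isLt).2.2.2 h.symm)
    | some (i, false), some (j, false) =>
      by_cases hij : i = j
      · rw [hij]
      · exact absurd hab ((hmdist i.val j.val i.isLt j.isLt
          (fun h => hij (Fin.ext h))).2)
    | some (i, false), some (j, true) =>
      exact absurd hab (hmw i.val j.val i.isLt j.isLt)
    | some (i, true), some (j, false) =>
      exact absurd hab.symm (hmw j.val i.val j.isLt i.isLt)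
    | some (i, true), some (j, true) =>
      by_cases hij : i = j
      · rw [hij]
      · exact absurd hab ((hwdist i.val j.val i.isLt j.isLt
          (fun h => hij (Fin.ext h))).2)
  refine ⟨⟨f, hinj⟩, ?_⟩
  intro a b
  simp only [Function.Embedding.coeFn_mk]
  match a, b with
  | none, none =>
    exact iff_of_false (G.irrefl) (star_none_none _)
  | none, some (j, bb) =>
    cases bb with
    | false =>
      rw [hfnone, hffalse]
      exact iff_of_true (hAdjvm j.val j.isLt) ((star_none_some _ j false).mpr rfl)
    | true =>
      rw [hfnone, hftrue]
      exact iff_of_false (hnadjvw j.val j.isLt)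
        (fun h => Bool.noConfusion ((star_none_some _ j true).mp h))
  | some (i, bi), none =>
    cases bi with
    | false =>
      rw [hfnone, hffalse]
      exact iff_of_true ((hAdjvm i.val i.isLt).symm)
        (((star_none_some _ i false).mpr rfl).symm)
    | true =>
      rw [hfnone, hftrue]
      exact iff_of_false (fun h => hnadjvw i.val i.isLt h.symm)
        (fun h => Bool.noConfusion ((star_none_some _ i true).mp h.symm))
  | some (i, bi), some (j, bj) =>
    rw [star_some_some]
    cases bi with
    | false =>
      cases bj with
      | false =>
        rw [hffalse, hffalse]
        refine iff_of_false ?_ (fun h => h.2 rfl)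
        by_cases hij : i = j
        · subst hij; exact G.irrefl
        · exact (hmdist i.val j.val i.isLt j.isLt (fun h => hij (Fin.ext h))).1
      | true =>
        rw [hffalse, hftrue]
        by_cases hij : i = j
        · subst hij
          exact iff_of_true ((hwS i.val i.isLt).2.1) ⟨rfl, Bool.noConfusion⟩
        · refine iff_of_false ?_ (fun h => hij h.1)
          exact (hwnadjm j.val i.val j.isLt i.isLt (fun h => hij (Fin.ext h))).1
    | true =>
      cases bj with
      | false =>
        rw [hftrue, hffalse]
        by_cases hij : i = j
        · subst hij
          exact iff_of_true ((hwS i.val i.isLt).2.1.symm) ⟨rfl, Bool.noConfusion⟩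
        · refine iff_of_false ?_ (fun h => hij h.1)
          exact fun h =>
            (hwnadjm i.val j.val i.isLt j.isLt (fun hh => hij (Fin.ext hh).symm)).1 h.symm
      | true =>
        rw [hftrue, hftrue]
        refine iff_of_false ?_ (fun h => h.2 rfl)
        by_cases hij : i = j
        · subst hij; exact G.irrefl
        · exact (hwdist i.val j.val i.isLt j.isLt (fun h => hij (Fin.ext h))).1
-- APPEND-SECTION: glue
lemma Wphase (hnK : ¬ ContainsKll G (b+2)) {msF : List V}
    (hlen : msF.length = e + 1)
    (hsubA : ∀ m ∈ msF, m ∈ A)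
    (hdist : ∀ (j1 j2 : ℕ), j1 < msF.length → j2 < msF.length → j1 ≠ j2 →
      msF.getD j1 v ≠ msF.getD j2 v)
    (hOp : ∀ j, j < msF.length → Lam (b+1) e ≤ (opool G S A v msF (msF.getD j v)).card) :
    Nonempty (WState G S A v b e msF (e+1)) := by
  have init : WState G S A v b e msF 0 := by
    refine ⟨[], rfl, by omega, List.Pairwise.nil, ?_⟩
    intro j h0 hj
    rw [clean_nil]
    have h1 : e - 0 = e := by omega
    rw [h1]
    exact hOp j hj
  have key : ∀ i : ℕ, i ≤ e + 1 → Nonempty (WState G S A v b e msF i) := by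
    intro i
    induction i with
    | zero => exact fun _ => ⟨init⟩
    | succ i ih =>
      intro h
      obtain ⟨st⟩ := ih (by omega)
      exact WStep hnK hlen hsubA hdist (by omega) st
  exact key (e+1) le_rfl

lemma main_construction (hnK : ¬ ContainsKll G (b+2)) (he : 1 ≤ e)
    (hS : S.Nonempty)
    (hdeg : ∀ u ∈ S, DD (b+1) e ≤ (S.filter (fun y => G.Adj u y)).card) :
    HasInducedCopy (subdividedStar (e+1)) G := by
  classical
  obtain ⟨v, hvS, hvmin⟩ := Finset.exists_min_image S
    (fun u => (S.filter (fun y => G.Adj u y)).card) hS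
  set A : Finset V := S.filter (fun y => G.Adj v y) with hA
  have hAcard : DD (b+1) e ≤ A.card := hdeg v hvS
  have hAv : ∀ y ∈ A, G.Adj v y := fun y hy => (Finset.mem_filter.mp hy).2
  have hvA : v ∉ A := fun h => G.irrefl (Finset.mem_filter.mp h).2
  have hAS : ∀ y, y ∈ A ↔ y ∈ S ∧ G.Adj v y := fun y => Finset.mem_filter
  have hA1 : (b+1) * Lam (b+1) (2*e) + (b+2) ≤ A.card := le_trans (R1_le_D b e he) hAcard
  have hA2 : Zet (b+1) (e+1) e + b ≤ A.card := le_trans (R2_le_D b e he) hAcard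
  have hWpb : ∀ m ∈ A, (A.filter (fun y => ¬ G.Adj m y)).card - 1 ≤ (Wp G S A v m).card := by
    intro m hm
    have hmS : m ∈ S := (Finset.mem_filter.mp hm).1
    have hdegm : A.card ≤ (S.filter (fun y => G.Adj m y)).card := hvmin m hmS
    have hsubN : S.filter (fun y => G.Adj m y) ⊆
        ((A.filter (fun y => G.Adj m y)) ∪ {v}) ∪ Wp G S A v m := by
      intro y hy
      obtain ⟨hyS, hyadj⟩ := Finset.mem_filter.mp hy
      by_cases h1 : y ∈ A
      · exact Finset.mem_union_left _ (Finset.mem_union_left _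
          (Finset.mem_filter.mpr ⟨h1, hyadj⟩))
      by_cases h2 : y = v
      · exact Finset.mem_union_left _ (Finset.mem_union_right _
          (Finset.mem_singleton.mpr h2))
      · refine Finset.mem_union_right _ ?_
        unfold Wp Nb
        exact Finset.mem_filter.mpr ⟨Finset.mem_filter.mpr ⟨hyS, hyadj⟩, h1, h2⟩
    have hcard1 : (S.filter (fun y => G.Adj m y)).card ≤
        (A.filter (fun y => G.Adj m y)).card + 1 + (Wp G S A v m).card := by
      calc (S.filter (fun y => G.Adj m y)).card
          ≤ (((A.filter (fun y => G.Adj m y)) ∪ {v}) ∪ Wp G S A v m).card :=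
            Finset.card_le_card hsubN
        _ ≤ ((A.filter (fun y => G.Adj m y)) ∪ {v}).card + (Wp G S A v m).card :=
            Finset.card_union_le _ _
        _ ≤ (A.filter (fun y => G.Adj m y)).card + 1 + (Wp G S A v m).card := by
            have := Finset.card_union_le (A.filter (fun y => G.Adj m y)) ({v} : Finset V)
            simp only [Finset.card_singleton] at this
            omega
    have hsplit := Finset.card_filter_add_card_filter_not
      (s := A) (fun y => G.Adj m y)
    omega
  obtain ⟨fs⟩ := Mphase (G := G) (S := S) (A := A) (v := v) (b := b) (e := e)
    hnK hAv hvA he hA1 hA2 hWpb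
  have hmlen : fs.ms.length = e+1 := fs.len
  have hmdmem : ∀ j, j < fs.ms.length → fs.ms.getD j v ∈ fs.ms := by
    intro j hj
    rw [List.getD_eq_getElem fs.ms v hj]
    exact List.getElem_mem hj
  have hdist : ∀ (j1 j2 : ℕ), j1 < fs.ms.length → j2 < fs.ms.length → j1 ≠ j2 →
      fs.ms.getD j1 v ≠ fs.ms.getD j2 v := by
    intro j1 j2 h1 h2 hne
    rcases Nat.lt_or_ge j1 j2 with h | h
    · exact (pairwise_getD fs.pair v j1 j2 h1 h2 h).2
    · exact fun hc => (pairwise_getD fs.pair v j2 j1 h2 h1 (by omega)).2 hc.symm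
  have hOp : ∀ j, j < fs.ms.length →
      Lam (b+1) e ≤ (opool G S A v fs.ms (fs.ms.getD j v)).card := by
    intro j hj
    have := fs.Opool (fs.ms.getD j v) (hmdmem j hj)
    have hidx : 2*e - (e+1) + 1 = e := by omega
    rwa [hidx] at this
  obtain ⟨gs⟩ := Wphase hnK hmlen fs.sub hdist hOp
  have hwmem : ∀ k, k < e+1 → gs.ws.getD k v ∈ opool G S A v fs.ms (fs.ms.getD k v) := by
    intro k hk
    have := gs.wmem k hk
    exact (Finset.mem_filter.mp this).1
  exact final_embed hAv hvA hAS fs.ms gs.ws hmlen gs.len fs.sub fs.pair gs.wpair hwmem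
end Main




end Stmt4Aux

theorem stmt4 {V : Type*} [Fintype V] [DecidableEq V]
    (G : SimpleGraph V) [DecidableRel G.Adj] (d ℓ : ℕ) (hd : 2 ≤ d) (hℓ : 2 ≤ ℓ)
    (hSfree : ¬ HasInducedCopy (subdividedStar d) G)
    (hK : ¬ ContainsKll G ℓ) :
    DegeneracyLE G ((ℓ - 1) * (ℓ ^ (d - 1) + (d - 1) * ℓ ^ d + ℓ ^ (2 * d - 2)) + 1) := by
  intro S hSne
  by_contra hcon
  push_neg at hcon
  obtain ⟨e, rfl⟩ : ∃ e, d = e + 1 := ⟨d - 1, by omega⟩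
  have he : 1 ≤ e := by omega
  obtain ⟨b, rfl⟩ : ∃ b, ℓ = b + 2 := ⟨ℓ - 2, by omega⟩
  apply hSfree
  apply Stmt4Aux.main_construction hK he hSne
  intro u hu
  have h1 := hcon u hu
  have hidx1 : e + 1 - 1 = e := by omega
  have hidx2 : 2 * (e + 1) - 2 = 2 * e := by omega
  have hidx3 : b + 2 - 1 = b + 1 := by omega
  rw [hidx1, hidx2, hidx3] at h1
  unfold Stmt4Aux.DD
  have hbb : b + 1 + 1 = b + 2 := rfl
  rw [hbb]
  omega
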